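/- Let β be a real with 0 < β < 1, let m ≥ 1 be an integer, and let A be a real with A > 1 + 2^m·β/(1−β). Consider the directed graph with vertices v₀, v₁, …, v_m and, for each i ∈ {1,…,m}, two extra vertices u_i and u'_i and four edges: v_{i−1}→u_i of weight A−1, u_i→v_i of weight 1, v_{i−1}→u'_i of weight A − 2^i·β/(1−β) − 1, and u'_i→v_i of weight 1 + 2^i/(1−β), with source s = v₀ and target t = v_m. Then: (a) all edge weights are nonnegative; (b) every edge of this graph is a feasible transition, and hence every directed s–t path is feasible; and (c) for every subset I ⊆ {1,…,m}, the s–t path that goes through u'_i exactly for the indices i ∈ I (and through u_i otherwise) has cost m·A + ∑_{i∈I} 2^i. -/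

import Mathlib

/-!
Common definitions for time-inconsistent planning models (Kleinberg–Oren).
A task graph is given by a finite vertex type `V`, an edge relation
`E : V → V → Prop` and edge weights `w : V → V → ℝ`.  A directed path is
represented by the list of its vertices (nonempty, consecutive vertices joined
by edges, no repeated vertices).
-/

variable {V : Type*}

/-- The (real) cost of a path: the sum of the weights of its edges. -/
def pathCost (w : V → V → ℝ) (p : List V) : ℝ :=
  ((p.zip p.tail).map fun e => w e.1 e.2).sum

/-- `p` is a directed path from `a` to `b` in the graph with edge relation `E`. -/
def IsPathOn (E : V → V → Prop) (a b : V) (p : List V) : Prop :=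
  p.head? = some a ∧ p.getLast? = some b ∧ p.Chain' E ∧ p.Nodup

/-- The perceived cost of a path with present bias `β`:
the weight of the first edge plus `β` times the total weight of the rest. -/
def perceived (w : V → V → ℝ) (β : ℝ) (p : List V) : ℝ :=
  match p.zip p.tail with
  | [] => 0
  | e :: es => w e.1 e.2 + β * ((es.map fun e' => w e'.1 e'.2).sum)

/-- The edge `a → b` is a feasible transition (towards target `t`): it is the
first edge of some `a`–`t` path whose perceived cost is minimum among all
`a`–`t` paths. -/
def FeasibleStep (E : V → V → Prop) (w : V → V → ℝ) (β : ℝ) (t : V) (a b : V) : Prop :=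
  E a b ∧ ∃ q : List V, IsPathOn E a t (a :: b :: q) ∧
    ∀ r : List V, IsPathOn E a t r → perceived w β (a :: b :: q) ≤ perceived w β r

/-- A feasible `s`–`t` path: every edge on it is a feasible transition from its tail. -/
def FeasPath (E : V → V → Prop) (w : V → V → ℝ) (β : ℝ) (s t : V) (p : List V) : Prop :=
  IsPathOn E s t p ∧ p.Chain' (FeasibleStep E w β t)

/-- The directed graph is acyclic: no directed cycle. -/
def NoDirCycle (E : V → V → Prop) : Prop := ∀ v, ¬ Relation.TransGen E v v

/-- Vertices of the chain-of-gadgets graph: `v i` for `i ∈ {0,…,m}` and,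
for each gadget `i ∈ {1,…,m}` (indexed by `Fin m`, gadget `i` ↔ index `i-1`),
two middle vertices `u (i-1) false = u_i` and `u (i-1) true = u'_i`. -/
inductive GVx (m : ℕ) : Type
  | v (i : Fin (m + 1))
  | u (i : Fin m) (primed : Bool)

/-- Edges: `v_{i-1} → u_i`, `v_{i-1} → u'_i`, `u_i → v_i`, `u'_i → v_i`. -/
def GE (m : ℕ) : GVx m → GVx m → Prop
  | GVx.v j, GVx.u i _ => (j : ℕ) = (i : ℕ)
  | GVx.u i _, GVx.v j => (j : ℕ) = (i : ℕ) + 1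
  | _, _ => False

/-- Edge weights: `v_{i-1}→u_i` has weight `A-1`, `u_i→v_i` weight `1`,
`v_{i-1}→u'_i` weight `A - 2^i·β/(1-β) - 1`, and `u'_i→v_i` weight
`1 + 2^i/(1-β)` (gadget `i` is represented by the index `j = i - 1 : Fin m`). -/
noncomputable def Gw (m : ℕ) (β A : ℝ) : GVx m → GVx m → ℝ
  | GVx.v _, GVx.u _ false => A - 1
  | GVx.v _, GVx.u j true => A - (2 : ℝ) ^ ((j : ℕ) + 1) * β / (1 - β) - 1
  | GVx.u _ false, GVx.v _ => 1
  | GVx.u j true, GVx.v _ => 1 + (2 : ℝ) ^ ((j : ℕ) + 1) / (1 - β)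
  | _, _ => 0

/-- The `s`–`t` path that goes through `u'_i` exactly for the indices `i` with
`f (i-1) = true` (and through `u_i` otherwise). -/
def Gpath (m : ℕ) (f : Fin m → Bool) : List (GVx m) :=
  ((List.finRange m).flatMap fun j => [GVx.v j.castSucc, GVx.u j (f j)]) ++ [GVx.v (Fin.last m)]

lemma pathCost_single (w : V → V → ℝ) (a : V) : pathCost w [a] = 0 := by simp [pathCost]

lemma pathCost_cons_cons (w : V → V → ℝ) (a b : V) (l : List V) :
    pathCost w (a :: b :: l) = w a b + pathCost w (b :: l) := by simp [pathCost]

lemma perceived_cons_cons (w : V → V → ℝ) (β : ℝ) (a b : V) (l : List V) :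
    perceived w β (a :: b :: l) = w a b + β * pathCost w (b :: l) := by
  simp [perceived, pathCost]

namespace GVx

def pos {m : ℕ} : GVx m → ℕ
  | .v i => 2 * (i : ℕ)
  | .u i _ => 2 * (i : ℕ) + 1

end GVx

def mkP (m : ℕ) (g : ℕ → Bool) : ℕ → ℕ → List (GVx m)
  | _, 0 => [GVx.v (Fin.last m)]
  | j, (k+1) =>
    if h : j < m then
      GVx.v ⟨j, by omega⟩ :: GVx.u ⟨j, h⟩ (g j) :: mkP m g (j+1) k
    else []

lemma mkP_cons (m : ℕ) (g : ℕ → Bool) :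
    ∀ (k j : ℕ) (hjk : j + k = m), ∃ l, mkP m g j k = GVx.v ⟨j, by omega⟩ :: l := by
  intro k j hjk
  cases k with
  | zero =>
    refine ⟨[], ?_⟩
    have : j = m := by omega
    subst this
    rfl
  | succ k =>
    rw [mkP, dif_pos (by omega)]
    exact ⟨_, rfl⟩

lemma mkP_getLast (m : ℕ) (g : ℕ → Bool) :
    ∀ (k j : ℕ), j + k = m → (mkP m g j k).getLast? = some (GVx.v (Fin.last m)) := by
  intro k
  induction k with
  | zero => intro j hjk; rfl
  | succ k ih =>
    intro j hjk
    rw [mkP, dif_pos (by omega)]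
    obtain ⟨l, hl⟩ := mkP_cons m g k (j+1) (by omega)
    rw [hl, List.getLast?_cons_cons, List.getLast?_cons_cons, ← hl]
    exact ih (j+1) (by omega)

lemma mkP_chain (m : ℕ) (g : ℕ → Bool) :
    ∀ (k j : ℕ), j + k = m → (mkP m g j k).Chain' (GE m) := by
  intro k
  induction k with
  | zero => intro j hjk; exact List.isChain_singleton _
  | succ k ih =>
    intro j hjk
    rw [mkP, dif_pos (by omega)]
    obtain ⟨l, hl⟩ := mkP_cons m g k (j+1) (by omega)
    rw [hl, List.Chain', List.isChain_cons_cons, List.isChain_cons_cons]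
    refine ⟨rfl, ?_, ?_⟩
    · show (j + 1 : ℕ) = j + 1; rfl
    · rw [← hl]; exact ih (j+1) (by omega)

lemma mkP_pos (m : ℕ) (g : ℕ → Bool) :
    ∀ (k j : ℕ), j + k = m → ∀ x ∈ mkP m g j k, 2 * j ≤ x.pos := by
  intro k
  induction k with
  | zero =>
    intro j hjk x hx
    simp only [mkP, List.mem_singleton] at hx
    subst hx
    simp [GVx.pos, Fin.last]
    omega
  | succ k ih =>
    intro j hjk x hx
    rw [mkP, dif_pos (by omega)] at hx
    simp only [List.mem_cons] at hx
    rcases hx with rfl | rfl | hx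
    · simp [GVx.pos]
    · simp only [GVx.pos]; omega
    · have := ih (j+1) (by omega) x hx
      omega

lemma mkP_nodup (m : ℕ) (g : ℕ → Bool) :
    ∀ (k j : ℕ), j + k = m → (mkP m g j k).Nodup := by
  intro k
  induction k with
  | zero => intro j hjk; simp [mkP]
  | succ k ih =>
    intro j hjk
    rw [mkP, dif_pos (by omega)]
    refine List.nodup_cons.mpr ⟨?_, List.nodup_cons.mpr ⟨?_, ih (j+1) (by omega)⟩⟩
    · intro hmem
      rcases List.mem_cons.mp hmem with h | h
      · cases h
      · have := mkP_pos m g k (j+1) (by omega) _ h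
        simp only [GVx.pos] at this
        omega
    · intro hmem
      have := mkP_pos m g k (j+1) (by omega) _ hmem
      simp only [GVx.pos] at this
      omega

noncomputable def Ssum (g : ℕ → Bool) (j k : ℕ) : ℝ :=
  ∑ i ∈ Finset.range k, if g (j + i) then (2 : ℝ) ^ (j + i + 1) else 0

lemma Ssum_nonneg (g : ℕ → Bool) (j k : ℕ) : 0 ≤ Ssum g j k := by
  refine Finset.sum_nonneg fun i _ => ?_
  split <;> positivity

lemma Ssum_false (j k : ℕ) : Ssum (fun _ => false) j k = 0 := by simp [Ssum]

lemma mkP_cost (m : ℕ) {β A : ℝ} (hβ : (1 : ℝ) - β ≠ 0) (g : ℕ → Bool) :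
    ∀ (k j : ℕ), j + k = m →
      pathCost (Gw m β A) (mkP m g j k) = k * A + Ssum g j k := by
  intro k
  induction k with
  | zero => intro j hjk; simp [mkP, pathCost_single, Ssum]
  | succ k ih =>
    intro j hjk
    rw [mkP, dif_pos (by omega)]
    obtain ⟨l, hl⟩ := mkP_cons m g k (j+1) (by omega)
    rw [hl, pathCost_cons_cons, pathCost_cons_cons, ← hl, ih (j+1) (by omega)]
    have hsplit : Ssum g j (k+1) =
        (if g j then (2:ℝ) ^ (j+1) else 0) + Ssum g (j+1) k := by
      rw [Ssum, Finset.sum_range_succ']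
      have he : ∑ i ∈ Finset.range k, (if g (j+(i+1)) then (2:ℝ)^(j+(i+1)+1) else 0)
          = Ssum g (j+1) k :=
        Finset.sum_congr rfl fun i _ => by rw [show j+(i+1) = (j+1)+i from by omega]
      rw [he, Nat.add_zero]
      exact add_comm _ _
    rw [hsplit]
    cases hgj : g j <;> simp only [Gw, hgj] <;> push_cast <;> field_simp <;> ring

lemma mkP_congr (m : ℕ) (g g' : ℕ → Bool) :
    ∀ (k j : ℕ), (∀ n, j ≤ n → g n = g' n) → mkP m g j k = mkP m g' j k := by
  intro k
  induction k with
  | zero => intro j _; rfl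
  | succ k ih =>
    intro j h
    by_cases hj : j < m
    · rw [mkP, dif_pos hj, mkP, dif_pos hj, h j le_rfl,
        ih (j+1) (fun n hn => h n (by omega))]
    · rw [mkP, dif_neg hj, mkP, dif_neg hj]

lemma classify_v (m : ℕ) :
    ∀ (k j : ℕ) (hjk : j + k = m) (p : List (GVx m)),
      IsPathOn (GE m) (GVx.v ⟨j, by omega⟩) (GVx.v (Fin.last m)) p →
      ∃ g : ℕ → Bool, p = mkP m g j k := by
  intro k
  induction k with
  | zero =>
    intro j hjk p hp
    obtain ⟨hh, hlast, hchain, hnd⟩ := hp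
    cases p with
    | nil => simp at hh
    | cons a p' =>
    have ha : a = GVx.v ⟨j, by omega⟩ := by simpa using hh
    subst ha
    cases p' with
    | nil =>
      refine ⟨fun _ => false, ?_⟩
      have hj : j = m := by omega
      subst hj
      rfl
    | cons b p'' =>
      exfalso
      have h1 := (List.isChain_cons_cons.mp hchain).1
      cases b with
      | v i' => exact h1
      | u i' bb =>
        have h1' : j = (i' : ℕ) := h1
        have := i'.isLt
        omega
  | succ k ih =>
    intro j hjk p hp
    obtain ⟨hh, hlast, hchain, hnd⟩ := hp
    have hjm : j < m := by omega
    cases p with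
    | nil => simp at hh
    | cons a p' =>
      have ha : a = GVx.v ⟨j, by omega⟩ := by simpa using hh
      subst ha
      cases p' with
      | nil =>
        exfalso
        simp [List.getLast?] at hlast
        have := congrArg Fin.val hlast
        simp [Fin.last] at this
        omega
      | cons b p'' =>
        have h1 := (List.isChain_cons_cons.mp hchain).1
        cases b with
        | v i' => exact absurd h1 (by simp [GE])
        | u i' bb =>
          have hi' : i' = ⟨j, hjm⟩ := Fin.ext (by exact h1.symm)
          subst hi'
          cases p'' with
          | nil =>
            exfalso
            simp [List.getLast?] at hlast
          | cons c p''' =>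
            have h2 := (List.isChain_cons_cons.mp (List.isChain_cons_cons.mp hchain).2).1
            cases c with
            | u i'' bb' => exact absurd h2 (by simp [GE])
            | v i'' =>
              have hi'' : i'' = ⟨j+1, by omega⟩ := Fin.ext (by simpa [GE] using h2)
              subst hi''
              have hrest : IsPathOn (GE m) (GVx.v ⟨j+1, by omega⟩) (GVx.v (Fin.last m))
                  (GVx.v ⟨j+1, by omega⟩ :: p''') := by
                refine ⟨rfl, ?_, ?_, ?_⟩
                · rw [← hlast, List.getLast?_cons_cons, List.getLast?_cons_cons]
                · exact (List.isChain_cons_cons.mp (List.isChain_cons_cons.mp hchain).2).2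
                · exact ((List.nodup_cons.mp (List.nodup_cons.mp hnd).2).2)
              obtain ⟨g, hg⟩ := ih (j+1) (by omega) _ hrest
              refine ⟨fun n => if n = j then bb else g n, ?_⟩
              rw [mkP, dif_pos hjm,
                ← mkP_congr m g (fun n => if n = j then bb else g n) k (j+1)
                  (fun n hn => by
                    show g n = if n = j then bb else g n
                    rw [if_neg (by omega)]),
                ← hg]
              simp

lemma classify_u (m : ℕ) (jj : Fin m) (b : Bool) (p : List (GVx m))
    (hp : IsPathOn (GE m) (GVx.u jj b) (GVx.v (Fin.last m)) p) :
    ∃ g : ℕ → Bool, p = GVx.u jj b :: mkP m g ((jj : ℕ) + 1) (m - ((jj : ℕ) + 1)) := by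
  obtain ⟨hh, hlast, hchain, hnd⟩ := hp
  cases p with
  | nil => simp at hh
  | cons a p' =>
    have ha : a = GVx.u jj b := by simpa using hh
    subst ha
    cases p' with
    | nil => exfalso; simp [List.getLast?] at hlast
    | cons c p'' =>
      have h1 := (List.isChain_cons_cons.mp hchain).1
      cases c with
      | u i'' bb' => exact absurd h1 (by simp [GE])
      | v i'' =>
        have hi'' : i'' = ⟨(jj:ℕ)+1, by omega⟩ := Fin.ext (by simpa [GE] using h1)
        subst hi''
        have hrest : IsPathOn (GE m) (GVx.v ⟨(jj:ℕ)+1, by omega⟩) (GVx.v (Fin.last m))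
            (GVx.v ⟨(jj:ℕ)+1, by omega⟩ :: p'') := by
          refine ⟨rfl, ?_, (List.isChain_cons_cons.mp hchain).2, (List.nodup_cons.mp hnd).2⟩
          rw [← hlast, List.getLast?_cons_cons]
        obtain ⟨g, hg⟩ := classify_v m (m - ((jj:ℕ)+1)) ((jj:ℕ)+1) (by omega) _ hrest
        exact ⟨g, by rw [hg]⟩

lemma keyW (m : ℕ) {β : ℝ} (A : ℝ) (hβ : (1:ℝ) - β ≠ 0) (x y : Fin (m+1)) (jj : Fin m) (b : Bool) :
    Gw m β A (GVx.v x) (GVx.u jj b) + β * Gw m β A (GVx.u jj b) (GVx.v y) = A - 1 + β := by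
  cases b <;> simp only [Gw] <;> field_simp <;> ring

lemma perceived_vu (m : ℕ) {β A : ℝ} (hβ : (1:ℝ) - β ≠ 0) (x : Fin (m+1)) (jj : Fin m)
    (b : Bool) (g : ℕ → Bool) (k : ℕ) (hjk : ((jj:ℕ)+1) + k = m) :
    perceived (Gw m β A) β (GVx.v x :: GVx.u jj b :: mkP m g ((jj:ℕ)+1) k) =
      (A - 1 + β) + β * (k * A + Ssum g ((jj:ℕ)+1) k) := by
  obtain ⟨l, hl⟩ := mkP_cons m g k ((jj:ℕ)+1) hjk
  rw [perceived_cons_cons, hl, pathCost_cons_cons, ← hl, mkP_cost m hβ g k ((jj:ℕ)+1) hjk]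
  have hk := keyW m A hβ x ⟨(jj:ℕ)+1, by omega⟩ jj b
  linear_combination hk

lemma perceived_uv (m : ℕ) {β A : ℝ} (hβ : (1:ℝ) - β ≠ 0) (jj : Fin m)
    (b : Bool) (g : ℕ → Bool) (k : ℕ) (hjk : ((jj:ℕ)+1) + k = m) :
    perceived (Gw m β A) β (GVx.u jj b :: mkP m g ((jj:ℕ)+1) k) =
      Gw m β A (GVx.u jj b) (GVx.v ⟨(jj:ℕ)+1, by omega⟩) + β * (k * A + Ssum g ((jj:ℕ)+1) k) := by
  obtain ⟨l, hl⟩ := mkP_cons m g k ((jj:ℕ)+1) hjk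
  rw [hl, perceived_cons_cons, ← hl, mkP_cost m hβ g k ((jj:ℕ)+1) hjk]

lemma Gw_uv (m : ℕ) {β A : ℝ} (jj : Fin m) (b : Bool) (y y' : Fin (m+1)) :
    Gw m β A (GVx.u jj b) (GVx.v y) = Gw m β A (GVx.u jj b) (GVx.v y') := by
  cases b <;> rfl

lemma Gpath_eq (m : ℕ) (f : Fin m → Bool) :
    Gpath m f = mkP m (fun n => if h : n < m then f ⟨n, h⟩ else false) 0 m := by
  have key : ∀ (k j : ℕ), j + k = m →
      (((List.finRange m).drop j).flatMap fun i => [GVx.v i.castSucc, GVx.u i (f i)])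
          ++ [GVx.v (Fin.last m)]
        = mkP m (fun n => if h : n < m then f ⟨n, h⟩ else false) j k := by
    intro k
    induction k with
    | zero =>
      intro j hjk
      rw [List.drop_of_length_le (by simp; omega)]
      rfl
    | succ k ih =>
      intro j hjk
      have hj : j < m := by omega
      rw [List.drop_eq_getElem_cons (by simpa using hj), List.getElem_finRange,
        List.flatMap_cons, mkP, dif_pos hj]
      have : (fun n => if h : n < m then f ⟨n, h⟩ else false) j = f ⟨j, hj⟩ := by
        simp [hj]
      rw [← ih (j+1) (by omega)]
      simp [Fin.cast, Fin.castSucc, Fin.castAdd, Fin.castLE, hj]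
  have := key m 0 (by omega)
  rw [List.drop_zero] at this
  exact this.symm ▸ rfl

/-- For the gadget-chain model with source `s = v₀`, target
`t = v_m` and `A > 1 + 2^m·β/(1-β)`: (a) all edge weights are nonnegative;
(b) every edge is a feasible transition, hence every directed `s`–`t` path is
feasible; (c) the path choosing the primed branch exactly on `I ⊆ {1,…,m}` is
an `s`–`t` path of cost `m·A + ∑_{i∈I} 2^i`. -/
theorem stmt1 (m : ℕ) (hm : 1 ≤ m) (β : ℝ) (hβ0 : 0 < β) (hβ1 : β < 1)
    (A : ℝ) (hA : 1 + (2 : ℝ) ^ m * β / (1 - β) < A) :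
    (∀ a b, GE m a b → 0 ≤ Gw m β A a b) ∧
    (∀ a b, GE m a b → FeasibleStep (GE m) (Gw m β A) β (GVx.v (Fin.last m)) a b) ∧
    (∀ p, IsPathOn (GE m) (GVx.v 0) (GVx.v (Fin.last m)) p →
        FeasPath (GE m) (Gw m β A) β (GVx.v 0) (GVx.v (Fin.last m)) p) ∧
    (∀ f : Fin m → Bool,
        IsPathOn (GE m) (GVx.v 0) (GVx.v (Fin.last m)) (Gpath m f) ∧
        pathCost (Gw m β A) (Gpath m f) =
          m * A + ∑ j ∈ Finset.univ.filter fun j => f j = true, (2 : ℝ) ^ ((j : ℕ) + 1)) := by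
  have h1β : (0:ℝ) < 1 - β := by linarith
  have hβne : (1:ℝ) - β ≠ 0 := ne_of_gt h1β
  have hc : 0 ≤ β / (1 - β) := by positivity
  have hAm : 0 ≤ (2:ℝ) ^ m * β / (1 - β) := by positivity
  -- (a) nonnegative weights
  have hwa : ∀ a b, GE m a b → 0 ≤ Gw m β A a b := by
    intro a b hab
    cases a with
    | v i =>
      cases b with
      | v i' => exact hab.elim
      | u jj bb =>
        cases bb with
        | false => show (0:ℝ) ≤ A - 1; linarith
        | true =>
          show (0:ℝ) ≤ A - (2:ℝ) ^ ((jj:ℕ)+1) * β / (1 - β) - 1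
          have hle : (2:ℝ) ^ ((jj:ℕ)+1) ≤ (2:ℝ) ^ m :=
            pow_le_pow_right₀ (by norm_num) (by have := jj.isLt; omega)
          have h2 : (2:ℝ) ^ ((jj:ℕ)+1) * β / (1 - β) ≤ (2:ℝ) ^ m * β / (1 - β) := by
            rw [mul_div_assoc, mul_div_assoc]
            exact mul_le_mul_of_nonneg_right hle hc
          linarith
    | u jj bb =>
      cases b with
      | u _ _ => exact hab.elim
      | v i' =>
        cases bb with
        | false => show (0:ℝ) ≤ 1; norm_num
        | true => show (0:ℝ) ≤ 1 + (2:ℝ) ^ ((jj:ℕ)+1) / (1 - β); positivity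
  -- (b) every edge is feasible
  have hfeas : ∀ a b, GE m a b → FeasibleStep (GE m) (Gw m β A) β (GVx.v (Fin.last m)) a b := by
    intro a b hab
    cases a with
    | v i =>
      cases b with
      | v i' => exact hab.elim
      | u jj bb =>
        have hij : (i:ℕ) = (jj:ℕ) := hab
        have hjm : (jj:ℕ) < m := jj.isLt
        have hi : i = ⟨(jj:ℕ), Nat.lt_succ_of_lt hjm⟩ := Fin.ext hij
        subst hi
        set k := m - ((jj:ℕ)+1) with hkdef
        have hjk : ((jj:ℕ)+1) + k = m := by omega
        obtain ⟨l, hl⟩ := mkP_cons m (fun _ => false) k ((jj:ℕ)+1) hjk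
        refine ⟨hab, mkP m (fun _ => false) ((jj:ℕ)+1) k, ⟨rfl, ?_, ?_, ?_⟩, ?_⟩
        · rw [hl, List.getLast?_cons_cons, List.getLast?_cons_cons, ← hl]
          exact mkP_getLast m _ k _ hjk
        · rw [hl, List.Chain', List.isChain_cons_cons, List.isChain_cons_cons, ← hl]
          exact ⟨hab, rfl, mkP_chain m _ k _ hjk⟩
        · refine List.nodup_cons.mpr ⟨?_, List.nodup_cons.mpr ⟨?_, mkP_nodup m _ k _ hjk⟩⟩
          · intro hmem
            rcases List.mem_cons.mp hmem with h | h
            · cases h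
            · have := mkP_pos m _ k _ hjk _ h
              simp only [GVx.pos] at this
              omega
          · intro hmem
            have := mkP_pos m _ k _ hjk _ hmem
            simp only [GVx.pos] at this
            omega
        · intro r hr
          obtain ⟨g, rfl⟩ := classify_v m (m - (jj:ℕ)) (jj:ℕ) (by omega) r hr
          have hmk : m - (jj:ℕ) = k + 1 := by omega
          rw [hmk, mkP, dif_pos hjm]
          rw [perceived_vu m hβne _ jj bb (fun _ => false) k hjk,
            perceived_vu m hβne _ jj (g (jj:ℕ)) g k hjk, Ssum_false]
          have hs := Ssum_nonneg g ((jj:ℕ)+1) k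
          nlinarith [mul_nonneg hβ0.le hs]
    | u jj bb =>
      cases b with
      | u _ _ => exact hab.elim
      | v i' =>
        have hij : (i':ℕ) = (jj:ℕ) + 1 := hab
        have hjm : (jj:ℕ) < m := jj.isLt
        have hi : i' = ⟨(jj:ℕ)+1, Nat.succ_lt_succ hjm⟩ := Fin.ext hij
        subst hi
        set k := m - ((jj:ℕ)+1) with hkdef
        have hjk : ((jj:ℕ)+1) + k = m := by omega
        obtain ⟨l, hl⟩ := mkP_cons m (fun _ => false) k ((jj:ℕ)+1) hjk
        have hpath : GVx.u jj bb :: GVx.v ⟨(jj:ℕ)+1, by omega⟩ :: l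
            = GVx.u jj bb :: mkP m (fun _ => false) ((jj:ℕ)+1) k := by rw [hl]
        refine ⟨hab, l, ?_, ?_⟩
        · rw [hpath]
          refine ⟨rfl, ?_, ?_, ?_⟩
          · rw [hl, List.getLast?_cons_cons, ← hl]
            exact mkP_getLast m _ k _ hjk
          · rw [hl, List.Chain', List.isChain_cons_cons, ← hl]
            exact ⟨hab, mkP_chain m _ k _ hjk⟩
          · refine List.nodup_cons.mpr ⟨?_, mkP_nodup m _ k _ hjk⟩
            intro hmem
            have := mkP_pos m _ k _ hjk _ hmem
            simp only [GVx.pos] at this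
            omega
        · intro r hr
          rw [hpath]
          obtain ⟨g, rfl⟩ := classify_u m jj bb r hr
          rw [perceived_uv m hβne jj bb (fun _ => false) k hjk,
            perceived_uv m hβne jj bb g (m - ((jj:ℕ)+1)) (by omega), Ssum_false]
          have hs := Ssum_nonneg g ((jj:ℕ)+1) (m - ((jj:ℕ)+1))
          have hk2 : (↑(m - ((jj:ℕ)+1)) : ℝ) = (k : ℝ) := by rw [hkdef]
          rw [hk2]
          nlinarith [mul_nonneg hβ0.le hs]
  refine ⟨hwa, hfeas, ?_, ?_⟩
  · intro p hp
    exact ⟨hp, List.IsChain.imp (fun a b h => hfeas a b h) hp.2.2.1⟩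
  · intro f
    have hge := Gpath_eq m f
    have h0m : 0 + m = m := by omega
    constructor
    · rw [hge]
      obtain ⟨l, hl⟩ := mkP_cons m _ m 0 h0m
      refine ⟨?_, mkP_getLast m _ m 0 h0m, mkP_chain m _ m 0 h0m, mkP_nodup m _ m 0 h0m⟩
      rw [hl]
      have h0 : (⟨0, by omega⟩ : Fin (m+1)) = 0 := Fin.ext (by simp)
      rw [h0]
      rfl
    · rw [hge, mkP_cost m hβne _ m 0 h0m]
      congr 1
      rw [Finset.sum_filter, Ssum,
        ← Fin.sum_univ_eq_sum_range
          (fun i => if (fun n => if h : n < m then f ⟨n, h⟩ else false) (0 + i)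
            then (2:ℝ) ^ (0 + i + 1) else 0) m]
      refine Finset.sum_congr rfl fun j _ => ?_
      simp [j.isLt]
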